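/- (Main theorem) Let m ≥ 2, n ≥ 3, and let k be a unit modulo n of multiplicative order α with k^m ≡ 1 (mod n). Assume α is even and k^{α/2} ≡ −1 (mod n). Then diam(G_{m,n,k}) ≤ ⌊m/2⌋ + wt(n, k; α) if α ≠ m, and diam(G_{m,n,k}) ≤ ⌊m/2⌋ + wt(n, k; α) + deg(n,k;α) if α = m. -/

import Mathlib

/-- The set `Ω(i, λ) = { b₁k^{i₁} + ⋯ + b_r k^{i_r} mod n : |b_j| ≤ λ_j }` in `ℤ/nℤ`. -/
def OmegaSet (n : ℕ) (k : (ZMod n)ˣ) {r : ℕ} (i : Fin r → ℕ) (lam : Fin r → ℕ) :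
    Set (ZMod n) :=
  { x | ∃ b : Fin r → ℤ, (∀ j, |b j| ≤ (lam j : ℤ)) ∧
      x = ∑ j, (b j : ZMod n) * ((k ^ i j : (ZMod n)ˣ) : ZMod n) }

/-- A `sequence`: a strictly decreasing tuple `α−1 ≥ i₁ > i₂ > ⋯ > i_r ≥ 0`. -/
def IsSeq (α : ℕ) {r : ℕ} (i : Fin r → ℕ) : Prop :=
  (∀ j, i j ≤ α - 1) ∧ StrictAnti i

/-- `wt(n, k; i)`: the minimal total weight `λ₁ + ⋯ + λ_r` over tuples `λ`
with `Ω(i,λ) = ℤ/nℤ`. -/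
noncomputable def wtSeq (n : ℕ) (k : (ZMod n)ˣ) {r : ℕ} (i : Fin r → ℕ) : ℕ :=
  sInf { s | ∃ lam : Fin r → ℕ, OmegaSet n k i lam = Set.univ ∧ ∑ j, lam j = s }

/-- The maximal sequence `Δ : α−1 > α−2 > ⋯ > 1 > 0`. -/
def DeltaSeq (α : ℕ) : Fin α → ℕ := fun j => α - 1 - (j : ℕ)

/-- `wt(n, k; α) := wt(n, k; Δ)`. -/
noncomputable def wtAlpha (n : ℕ) (k : (ZMod n)ˣ) (α : ℕ) : ℕ :=
  wtSeq n k (DeltaSeq α)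

/-- The degree of a sequence: its largest entry. -/
noncomputable def degSeq {r : ℕ} (i : Fin r → ℕ) : ℕ := sSup (Set.range i)

/-- The codegree of a sequence: its smallest nonzero entry. -/
noncomputable def codegSeq {r : ℕ} (i : Fin r → ℕ) : ℕ :=
  sInf { v | v ∈ Set.range i ∧ v ≠ 0 }

/-- A minimal prime sequence realizing `wt(n,k;α)`: a reduced sequence (i.e. one
containing `0`) of weight `wt(n,k;α)` such that no proper reduced subsequence
has weight `wt(n,k;α)`. -/
def IsMinimalPrimeSeq (n : ℕ) (k : (ZMod n)ˣ) (α : ℕ) {r : ℕ} (i : Fin r → ℕ) : Prop :=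
  IsSeq α i ∧ 0 ∈ Set.range i ∧ wtSeq n k i = wtAlpha n k α ∧
    ∀ (q : ℕ) (i₀ : Fin q → ℕ), IsSeq α i₀ → 0 ∈ Set.range i₀ →
      Set.range i₀ ⊆ Set.range i → Set.range i₀ ≠ Set.range i →
      wtSeq n k i₀ ≠ wtAlpha n k α

/-- `deg(n,k;α)`: the smallest degree of a minimal prime sequence realizing `wt(n,k;α)`. -/
noncomputable def degNK (n : ℕ) (k : (ZMod n)ˣ) (α : ℕ) : ℕ :=
  sInf { d | ∃ (r : ℕ) (i : Fin r → ℕ), IsMinimalPrimeSeq n k α i ∧ degSeq i = d }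
/-- Relators of the split metacyclic group `⟨x, y | x^m = y^n = 1, x⁻¹yx = y^k⟩`,
with generator `0` playing the role of `x` and `1` that of `y`. -/
def metacyclicRels (m n k : ℕ) : Set (FreeGroup (Fin 2)) :=
  { FreeGroup.of 0 ^ m, FreeGroup.of 1 ^ n,
    (FreeGroup.of 0)⁻¹ * FreeGroup.of 1 * FreeGroup.of 0 * (FreeGroup.of 1 ^ k)⁻¹ }

/-- The split metacyclic group `G_{m,n,k} = ℤ_m ⋉_k ℤ_n
  = ⟨x, y | x^m = y^n = 1, x⁻¹yx = y^k⟩`. -/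
abbrev SplitMetacyclic (m n k : ℕ) : Type := PresentedGroup (metacyclicRels m n k)

/-- The generator `x` of `G_{m,n,k}`. -/
def xgen (m n k : ℕ) : SplitMetacyclic m n k := PresentedGroup.of 0

/-- The generator `y` of `G_{m,n,k}`. -/
def ygen (m n k : ℕ) : SplitMetacyclic m n k := PresentedGroup.of 1

/-- The word norm of `g` with respect to a set `S` of generators:
the least `t` such that `g` is a product of `t` elements of `S`. -/
noncomputable def wordNorm {G : Type*} [Group G] (S : Set G) (g : G) : ℕ :=
  sInf { t | ∃ w : List G, (∀ u ∈ w, u ∈ S) ∧ w.length = t ∧ w.prod = g }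

/-- The diameter of a group with respect to a set `S` of generators. -/
noncomputable def diam {G : Type*} [Group G] (S : Set G) : ℕ :=
  ⨆ g : G, wordNorm S g

/-- The generating set `{x, x⁻¹, y, y⁻¹}` of `G_{m,n,k}`. -/
def genSet (m n k : ℕ) : Set (SplitMetacyclic m n k) :=
  {xgen m n k, (xgen m n k)⁻¹, ygen m n k, (ygen m n k)⁻¹}

section SMAux
open Finset

variable {m n k : ℕ}

lemma SM.rel_one {r : FreeGroup (Fin 2)} (hr : r ∈ metacyclicRels m n k) :
    PresentedGroup.mk (metacyclicRels m n k) r = 1 :=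
  (QuotientGroup.eq_one_iff r).2 (Subgroup.subset_normalClosure hr)

lemma SM.x_pow_m : (xgen m n k) ^ m = 1 := by
  have := SM.rel_one (show FreeGroup.of 0 ^ m ∈ metacyclicRels m n k from Set.mem_insert _ _)
  rwa [map_pow] at this

lemma SM.y_pow_n : (ygen m n k) ^ n = 1 := by
  have := SM.rel_one (show FreeGroup.of 1 ^ n ∈ metacyclicRels m n k from
    Set.mem_insert_iff.2 (Or.inr (Set.mem_insert _ _)))
  rwa [map_pow] at this

lemma SM.conj_rel :
    (xgen m n k)⁻¹ * ygen m n k * xgen m n k = ygen m n k ^ k := by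
  have := SM.rel_one (show (FreeGroup.of 0)⁻¹ * FreeGroup.of 1 * FreeGroup.of 0
      * (FreeGroup.of 1 ^ k)⁻¹ ∈ metacyclicRels m n k from
    Set.mem_insert_iff.2 (Or.inr (Set.mem_insert_iff.2 (Or.inr rfl))))
  simp only [map_mul, map_inv, map_pow] at this
  rw [mul_inv_eq_one] at this
  exact this

end SMAux
section SMAux2
open Finset

variable {m n k : ℕ} [NeZero n]

/-- `y^z` for `z : ZMod n`. -/
def SM.Ey (m k : ℕ) {n : ℕ} (z : ZMod n) : SplitMetacyclic m n k := ygen m n k ^ z.val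

lemma SM.ypow_eq_Ey (c : ℤ) : ygen m n k ^ c = SM.Ey m k ((c : ZMod n)) := by
  set z : ZMod n := (c : ZMod n) with hz
  have h1 : ((z.val : ℤ) : ZMod n) = (c : ZMod n) := by
    rw [Int.cast_natCast, ZMod.natCast_val, ZMod.cast_id]
  obtain ⟨t, ht⟩ : ((n : ℤ)) ∣ c - z.val := by
    rw [← ZMod.intCast_zmod_eq_zero_iff_dvd, Int.cast_sub, h1, sub_self]
  have hc : c = (z.val : ℤ) + n * t := by linarith
  rw [hc, zpow_add, zpow_natCast, zpow_mul, zpow_natCast,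
    SM.y_pow_n, one_zpow, mul_one]
  rfl

lemma SM.Ey_add (z w : ZMod n) : SM.Ey m k (z + w) = SM.Ey m k z * SM.Ey m k w := by
  have h1 : ((z.val + w.val : ℤ) : ZMod n) = z + w := by
    push_cast [ZMod.natCast_val, ZMod.cast_id]; ring
  calc SM.Ey m k (z + w) = ygen m n k ^ ((z.val + w.val : ℤ)) := by
        rw [SM.ypow_eq_Ey, h1]
    _ = _ := by rw [show ((z.val + w.val : ℤ)) = (z.val : ℤ) + (w.val : ℤ) by push_cast; ring,
        zpow_add, zpow_natCast, zpow_natCast]; rfl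

lemma SM.Ey_zero : SM.Ey m k (0 : ZMod n) = 1 := by
  have := SM.ypow_eq_Ey (m := m) (k := k) (n := n) 0
  simpa using this.symm

lemma SM.Ey_neg (z : ZMod n) : SM.Ey m k (-z) = (SM.Ey m k z)⁻¹ := by
  have : SM.Ey m k (z + -z) = SM.Ey m k z * SM.Ey m k (-z) := SM.Ey_add _ _
  rw [add_neg_cancel, SM.Ey_zero] at this
  exact (inv_eq_of_mul_eq_one_right (this.symm : _ = (1:SplitMetacyclic m n k))).symm

lemma SM.conj_Ey (z : ZMod n) :
    (xgen m n k)⁻¹ * SM.Ey m k z * xgen m n k = SM.Ey m k ((k : ZMod n) * z) := by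
  have hconj : ∀ c : ℤ, (xgen m n k)⁻¹ * ygen m n k ^ c * xgen m n k
      = ygen m n k ^ (c * k) := by
    intro c
    have h := SM.conj_rel (m := m) (n := n) (k := k)
    calc (xgen m n k)⁻¹ * ygen m n k ^ c * xgen m n k
        = ((xgen m n k)⁻¹ * ygen m n k * xgen m n k) ^ c := by
          have h2 := map_zpow (MulAut.conj ((xgen m n k)⁻¹)) (ygen m n k) c
          simpa [MulAut.conj_apply] using h2
      _ = (ygen m n k ^ k) ^ c := by rw [h]
      _ = ygen m n k ^ (c * k) := by rw [← zpow_natCast, ← zpow_mul, mul_comm]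
  have h2 : (((z.val : ℤ) * k : ℤ) : ZMod n) = (k : ZMod n) * z := by
    push_cast [ZMod.natCast_val, ZMod.cast_id]; ring
  calc (xgen m n k)⁻¹ * SM.Ey m k z * xgen m n k
      = (xgen m n k)⁻¹ * ygen m n k ^ ((z.val : ℤ)) * xgen m n k := by
        rw [zpow_natCast]; rfl
    _ = ygen m n k ^ ((z.val : ℤ) * k) := hconj _
    _ = SM.Ey m k ((k : ZMod n) * z) := by rw [SM.ypow_eq_Ey, h2]

end SMAux2
section SMAux3
open Finset

variable {m n k : ℕ} [NeZero n]

lemma SM.stepL (u : (ZMod n)ˣ) (hu : (u : ZMod n) = (k : ZMod n)) (z : ZMod n) :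
    (xgen m n k)⁻¹ * SM.Ey m k z = SM.Ey m k ((u : ZMod n) * z) * (xgen m n k)⁻¹ := by
  have h := SM.conj_Ey (m := m) (n := n) (k := k) z
  rw [← hu] at h
  calc (xgen m n k)⁻¹ * SM.Ey m k z
      = ((xgen m n k)⁻¹ * SM.Ey m k z * xgen m n k) * (xgen m n k)⁻¹ := by group
    _ = SM.Ey m k ((u : ZMod n) * z) * (xgen m n k)⁻¹ := by rw [h]

lemma SM.stepR (u : (ZMod n)ˣ) (hu : (u : ZMod n) = (k : ZMod n)) (z : ZMod n) :
    xgen m n k * SM.Ey m k z = SM.Ey m k (((u⁻¹ : (ZMod n)ˣ) : ZMod n) * z) * xgen m n k := by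
  have h := SM.stepL (m := m) u hu (((u⁻¹ : (ZMod n)ˣ) : ZMod n) * z)
  have h2 : (u : ZMod n) * (((u⁻¹ : (ZMod n)ˣ) : ZMod n) * z) = z := by
    rw [← mul_assoc, ← Units.val_mul, mul_inv_cancel, Units.val_one, one_mul]
  rw [h2] at h
  have h3 : SM.Ey m k z
      = (xgen m n k)⁻¹ * SM.Ey m k (((u⁻¹ : (ZMod n)ˣ) : ZMod n) * z) * xgen m n k := by
    rw [h]; group
  rw [h3]; group

lemma SM.main_conj (u : (ZMod n)ˣ) (hu : (u : ZMod n) = (k : ZMod n)) (a : ℤ) (z : ZMod n) :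
    xgen m n k ^ a * SM.Ey m k z
      = SM.Ey m k (((u ^ (-a) : (ZMod n)ˣ) : ZMod n) * z) * xgen m n k ^ a := by
  induction a using Int.induction_on generalizing z with
  | zero => simp
  | succ a ih =>
    have hx : xgen m n k ^ ((a : ℤ) + 1) = xgen m n k ^ (a : ℤ) * xgen m n k := by
      rw [zpow_add, zpow_one]
    have hc : ((u ^ (-(a : ℤ)) : (ZMod n)ˣ) : ZMod n) * (((u⁻¹ : (ZMod n)ˣ) : ZMod n) * z)
        = ((u ^ (-((a : ℤ) + 1)) : (ZMod n)ˣ) : ZMod n) * z := by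
      rw [← mul_assoc, ← Units.val_mul, ← zpow_neg_one, ← zpow_add]
      have he : (-(a:ℤ)) + -1 = -((a:ℤ)+1) := by ring
      rw [he]
    calc xgen m n k ^ ((a : ℤ) + 1) * SM.Ey m k z
        = xgen m n k ^ (a : ℤ) * (xgen m n k * SM.Ey m k z) := by rw [hx, mul_assoc]
      _ = xgen m n k ^ (a : ℤ) * SM.Ey m k (((u⁻¹ : (ZMod n)ˣ) : ZMod n) * z) * xgen m n k := by
          rw [SM.stepR u hu, ← mul_assoc]
      _ = SM.Ey m k (((u ^ (-((a:ℤ)+1)) : (ZMod n)ˣ) : ZMod n) * z) * xgen m n k ^ ((a:ℤ)+1) := by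
          rw [ih, hc, hx]; group
  | pred a ih =>
    have hx : xgen m n k ^ (-(a : ℤ) - 1) = xgen m n k ^ (-(a : ℤ)) * (xgen m n k)⁻¹ := by
      rw [← zpow_neg_one, ← zpow_add]
      have he : (-(a:ℤ)) + -1 = -(a:ℤ) - 1 := by ring
      rw [he]
    have hc : ((u ^ (-(-(a : ℤ))) : (ZMod n)ˣ) : ZMod n) * ((u : ZMod n) * z)
        = ((u ^ (-(-(a : ℤ) - 1)) : (ZMod n)ˣ) : ZMod n) * z := by
      rw [← mul_assoc, ← Units.val_mul]
      nth_rewrite 2 [show u = u ^ (1:ℤ) from (zpow_one u).symm]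
      rw [← zpow_add]
      have he : (-(-(a:ℤ))) + 1 = -(-(a:ℤ) - 1) := by ring
      rw [he]
    calc xgen m n k ^ (-(a : ℤ) - 1) * SM.Ey m k z
        = xgen m n k ^ (-(a : ℤ)) * ((xgen m n k)⁻¹ * SM.Ey m k z) := by rw [hx, mul_assoc]
      _ = xgen m n k ^ (-(a : ℤ)) * SM.Ey m k ((u : ZMod n) * z) * (xgen m n k)⁻¹ := by
          rw [SM.stepL u hu, ← mul_assoc]
      _ = SM.Ey m k (((u ^ (-(-(a:ℤ) - 1)) : (ZMod n)ˣ) : ZMod n) * z) * xgen m n k ^ (-(a:ℤ) - 1) := by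
          rw [ih, hc, hx]; group

lemma SM.xzpow_congr {a a' : ℤ} (h : ((m : ℤ)) ∣ a - a') : xgen m n k ^ a = xgen m n k ^ a' := by
  obtain ⟨t, ht⟩ := h
  have ha : a = a' + m * t := by linarith
  rw [ha, zpow_add, zpow_mul, zpow_natCast, SM.x_pow_m, one_zpow, mul_one]

end SMAux3
section SMAux4
open Finset

variable {m n k : ℕ}

/-- `g` is a product of at most `t` generators. -/
def SM.reach (m n k : ℕ) (g : SplitMetacyclic m n k) (t : ℕ) : Prop :=
  ∃ w : List (SplitMetacyclic m n k),
    (∀ u ∈ w, u ∈ genSet m n k) ∧ w.length ≤ t ∧ w.prod = g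

lemma SM.reach.norm_le {g : SplitMetacyclic m n k} {t : ℕ} (h : SM.reach m n k g t) :
    wordNorm (genSet m n k) g ≤ t := by
  obtain ⟨w, h1, h2, h3⟩ := h
  exact le_trans (Nat.sInf_le ⟨w, h1, rfl, h3⟩) h2

lemma SM.reach.mono {g : SplitMetacyclic m n k} {t t' : ℕ} (h : SM.reach m n k g t)
    (htt : t ≤ t') : SM.reach m n k g t' := by
  obtain ⟨w, h1, h2, h3⟩ := h
  exact ⟨w, h1, le_trans h2 htt, h3⟩

lemma SM.reach_mul {g g' : SplitMetacyclic m n k} {s t : ℕ} (h : SM.reach m n k g s)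
    (h' : SM.reach m n k g' t) : SM.reach m n k (g * g') (s + t) := by
  obtain ⟨w, h1, h2, h3⟩ := h
  obtain ⟨w', h1', h2', h3'⟩ := h'
  refine ⟨w ++ w', ?_, ?_, ?_⟩
  · intro u hu
    rcases List.mem_append.1 hu with hu | hu
    · exact h1 u hu
    · exact h1' u hu
  · simpa using Nat.add_le_add h2 h2'
  · rw [List.prod_append, h3, h3']

lemma SM.reach_x (e : ℤ) : SM.reach m n k (xgen m n k ^ e) e.natAbs := by
  obtain ⟨e', rfl | rfl⟩ := Int.eq_nat_or_neg e
  · refine ⟨List.replicate e' (xgen m n k), ?_, by simp, ?_⟩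
    · intro u hu
      rw [List.eq_of_mem_replicate hu]
      exact Or.inl rfl
    · rw [List.prod_replicate, zpow_natCast]
  · refine ⟨List.replicate e' (xgen m n k)⁻¹, ?_, by simp, ?_⟩
    · intro u hu
      rw [List.eq_of_mem_replicate hu]
      exact Or.inr (Or.inl rfl)
    · rw [List.prod_replicate, inv_pow, ← zpow_natCast, ← zpow_neg]

lemma SM.reach_y (c : ℤ) : SM.reach m n k (ygen m n k ^ c) c.natAbs := by
  obtain ⟨e', rfl | rfl⟩ := Int.eq_nat_or_neg c
  · refine ⟨List.replicate e' (ygen m n k), ?_, by simp, ?_⟩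
    · intro u hu
      rw [List.eq_of_mem_replicate hu]
      exact Or.inr (Or.inr (Or.inl rfl))
    · rw [List.prod_replicate, zpow_natCast]
  · refine ⟨List.replicate e' (ygen m n k)⁻¹, ?_, by simp, ?_⟩
    · intro u hu
      rw [List.eq_of_mem_replicate hu]
      exact Or.inr (Or.inr (Or.inr rfl))
    · rw [List.prod_replicate, inv_pow, ← zpow_natCast, ← zpow_neg]

lemma SM.reach_Ey [NeZero n] (c : ℤ) : SM.reach m n k (SM.Ey m k ((c : ZMod n))) c.natAbs := by
  rw [← SM.ypow_eq_Ey]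
  exact SM.reach_y c

end SMAux4
section SMAux5
open Finset

variable {m n k : ℕ} [NeZero n]

lemma SM.master (u : (ZMod n)ˣ) (hu : (u : ZMod n) = (k : ZMod n))
    (δ : ℤ) (hδ : δ = 1 ∨ δ = -1) (c : ℕ → ℤ) (r : ℕ) :
    SM.reach m n k
      (SM.Ey m k (∑ p ∈ Finset.range (r+1),
          (c p : ZMod n) * ((u ^ (-(δ * p)) : (ZMod n)ˣ) : ZMod n)) * xgen m n k ^ (δ * r))
      ((∑ p ∈ Finset.range (r+1), (c p).natAbs) + r) := by
  induction r with
  | zero =>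
    have e1 : (∑ p ∈ Finset.range (0+1), (c p : ZMod n) * ((u ^ (-(δ * p)) : (ZMod n)ˣ) : ZMod n))
        = ((c 0 : ℤ) : ZMod n) := by simp
    have e2 : xgen m n k ^ (δ * ((0:ℕ):ℤ)) = 1 := by
      rw [Nat.cast_zero, mul_zero, zpow_zero]
    rw [e1, e2, mul_one]
    simpa using SM.reach_Ey (m := m) (k := k) (c 0)
  | succ r ih =>
    have hδ1 : δ.natAbs = 1 := by rcases hδ with h | h <;> simp [h]
    have hstep : SM.Ey m k (∑ p ∈ Finset.range (r+2),
          (c p : ZMod n) * ((u ^ (-(δ * p)) : (ZMod n)ˣ) : ZMod n)) * xgen m n k ^ (δ * (r+1))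
        = (SM.Ey m k (∑ p ∈ Finset.range (r+1),
            (c p : ZMod n) * ((u ^ (-(δ * p)) : (ZMod n)ˣ) : ZMod n)) * xgen m n k ^ (δ * r))
          * xgen m n k ^ δ * ygen m n k ^ (c (r+1)) := by
      have h1 : xgen m n k ^ (δ * r) * xgen m n k ^ δ = xgen m n k ^ (δ * ((r:ℤ)+1)) := by
        rw [← zpow_add]; ring_nf
      have h2 : xgen m n k ^ (δ * ((r:ℤ)+1)) * SM.Ey m k ((c (r+1) : ZMod n))
          = SM.Ey m k (((u ^ (-(δ * ((r:ℤ)+1))) : (ZMod n)ˣ) : ZMod n) * (c (r+1) : ZMod n))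
            * xgen m n k ^ (δ * ((r:ℤ)+1)) := SM.main_conj u hu _ _
      calc SM.Ey m k (∑ p ∈ Finset.range (r+2),
              (c p : ZMod n) * ((u ^ (-(δ * p)) : (ZMod n)ˣ) : ZMod n)) * xgen m n k ^ (δ * (r+1))
          = (SM.Ey m k (∑ p ∈ Finset.range (r+1),
              (c p : ZMod n) * ((u ^ (-(δ * p)) : (ZMod n)ˣ) : ZMod n))
            * SM.Ey m k ((c (r+1) : ZMod n) * ((u ^ (-(δ * ((r:ℤ)+1))) : (ZMod n)ˣ) : ZMod n)))
            * xgen m n k ^ (δ * ((r:ℤ)+1)) := by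
            rw [Finset.sum_range_succ, SM.Ey_add]
            norm_num
          _ = _ := by
            rw [mul_comm ((c (r+1) : ZMod n)) _, mul_assoc, ← h2, ← SM.ypow_eq_Ey, ← h1]
            group
    rw [show ((r+1:ℕ):ℤ) = (r:ℤ)+1 by push_cast; ring, hstep]
    have := SM.reach_mul (SM.reach_mul ih (SM.reach_x δ)) (SM.reach_y (c (r+1)))
    refine this.mono ?_
    rw [hδ1]
    conv_rhs => rw [Finset.sum_range_succ]
    omega

lemma SM.build (u : (ZMod n)ˣ) (hu : (u : ZMod n) = (k : ZMod n))
    (δ : ℤ) (hδ : δ = 1 ∨ δ = -1) (c : ℕ → ℤ) (r : ℕ) (a : ℤ) :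
    wordNorm (genSet m n k)
      (SM.Ey m k (∑ p ∈ Finset.range (r+1),
          (c p : ZMod n) * ((u ^ (-(δ * p)) : (ZMod n)ˣ) : ZMod n)) * xgen m n k ^ a)
      ≤ (∑ p ∈ Finset.range (r+1), (c p).natAbs) + r + (a - δ * r).natAbs := by
  have h1 : xgen m n k ^ (δ * r) * xgen m n k ^ (a - δ * r) = xgen m n k ^ a := by
    rw [← zpow_add]; ring_nf
  have h2 := SM.reach_mul (SM.master (m := m) u hu δ hδ c r) (SM.reach_x (a - δ * r))
  rw [mul_assoc, h1] at h2
  exact h2.norm_le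

end SMAux5
section SMAux6
open Finset

variable {m n k : ℕ} [NeZero n]

lemma SM.form (u : (ZMod n)ˣ) (hu : (u : ZMod n) = (k : ZMod n)) (hn1 : 1 < n)
    (g : SplitMetacyclic m n k) :
    ∃ (z : ZMod n) (a : ℤ), g = SM.Ey m k z * xgen m n k ^ a := by
  let H : Subgroup (SplitMetacyclic m n k) :=
    { carrier := {g | ∃ (z : ZMod n) (a : ℤ), g = SM.Ey m k z * xgen m n k ^ a}
      one_mem' := ⟨0, 0, by rw [SM.Ey_zero, zpow_zero, mul_one]⟩
      mul_mem' := by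
        rintro g g' ⟨z, a, rfl⟩ ⟨z', a', rfl⟩
        refine ⟨z + ((u ^ (-a) : (ZMod n)ˣ) : ZMod n) * z', a + a', ?_⟩
        calc SM.Ey m k z * xgen m n k ^ a * (SM.Ey m k z' * xgen m n k ^ a')
            = SM.Ey m k z * (xgen m n k ^ a * SM.Ey m k z') * xgen m n k ^ a' := by group
          _ = SM.Ey m k z * (SM.Ey m k (((u ^ (-a) : (ZMod n)ˣ) : ZMod n) * z') * xgen m n k ^ a)
              * xgen m n k ^ a' := by rw [SM.main_conj u hu]
          _ = SM.Ey m k (z + ((u ^ (-a) : (ZMod n)ˣ) : ZMod n) * z') * xgen m n k ^ (a + a') := by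
              rw [SM.Ey_add, zpow_add]; group
      inv_mem' := by
        rintro g ⟨z, a, rfl⟩
        refine ⟨((u ^ a : (ZMod n)ˣ) : ZMod n) * (-z), -a, ?_⟩
        calc (SM.Ey m k z * xgen m n k ^ a)⁻¹
            = xgen m n k ^ (-a) * SM.Ey m k (-z) := by
              rw [SM.Ey_neg, zpow_neg]; group
          _ = SM.Ey m k (((u ^ a : (ZMod n)ˣ) : ZMod n) * (-z)) * xgen m n k ^ (-a) := by
              rw [SM.main_conj u hu, neg_neg] }
  have hg : g ∈ H := by
    refine PresentedGroup.generated_by _ H ?_ g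
    intro j
    fin_cases j
    · exact ⟨0, 1, by rw [SM.Ey_zero, zpow_one, one_mul]; rfl⟩
    · refine ⟨(1 : ZMod n), 0, ?_⟩
      have : SM.Ey m k (1 : ZMod n) = ygen m n k := by
        rw [SM.Ey, ZMod.val_one_eq_one_mod]
        rw [Nat.mod_eq_of_lt hn1, pow_one]
      simp [this, ygen]
  exact hg

end SMAux6
section SMAux7
open Finset

lemma SM.balanced (m : ℕ) (hm : 0 < m) (t : ℤ) :
    ∃ t' : ℤ, ((m : ℤ)) ∣ t - t' ∧ t'.natAbs ≤ m / 2 := by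
  refine ⟨(t + (m / 2 : ℕ)) % m - (m / 2 : ℕ), ⟨(t + (m / 2 : ℕ)) / m, ?_⟩, ?_⟩
  · rw [Int.emod_def]; ring
  · have h0 : 0 ≤ (t + (m / 2 : ℕ)) % m := Int.emod_nonneg _ (by exact_mod_cast hm.ne')
    have h1 : (t + (m / 2 : ℕ)) % m < m := Int.emod_lt_of_pos _ (by exact_mod_cast hm)
    omega

lemma SM.natAbs_sum_le {ι : Type*} (s : Finset ι) (f : ι → ℤ) :
    (∑ j ∈ s, f j).natAbs ≤ ∑ j ∈ s, (f j).natAbs := by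
  classical
  induction s using Finset.induction_on with
  | empty => simp
  | insert j s hj ih =>
    rw [Finset.sum_insert hj, Finset.sum_insert hj]
    calc _ ≤ (f _).natAbs + (∑ j ∈ _, f j).natAbs := Int.natAbs_add_le _ _
      _ ≤ _ := by omega

lemma SM.signK {n : ℕ} (u : (ZMod n)ˣ) (h : ℕ) (hneg : u ^ h = (-1 : (ZMod n)ˣ))
    (A B : ℤ) (hAB : ((h : ℤ)) ∣ A - B) :
    ∃ s : ℤ, s.natAbs = 1 ∧ ((s : ZMod n)) * ((u ^ A : (ZMod n)ˣ) : ZMod n)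
      = ((u ^ B : (ZMod n)ˣ) : ZMod n) := by
  obtain ⟨t, ht⟩ := hAB
  have hA : A = B + h * t := by linarith
  have hu : (u ^ A : (ZMod n)ˣ) = u ^ B * ((-1 : (ZMod n)ˣ)) ^ t := by
    rw [hA, zpow_add, zpow_mul, zpow_natCast, hneg]
  rcases Int.even_or_odd t with he | ho
  · refine ⟨1, rfl, ?_⟩
    rw [hu, he.neg_one_zpow, mul_one, Int.cast_one, one_mul]
  · refine ⟨-1, by norm_num, ?_⟩
    obtain ⟨sO, hs⟩ := ho
    have hsq : ((-1 : (ZMod n)ˣ)) ^ (2:ℤ) = 1 := by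
      rw [show (2:ℤ) = ((2:ℕ):ℤ) from rfl, zpow_natCast, neg_one_sq]
    have hodd : ((-1 : (ZMod n)ˣ)) ^ t = -1 := by
      rw [hs, zpow_add, zpow_one, zpow_mul, hsq, one_zpow, one_mul]
    rw [hu, hodd, Units.val_mul, Units.val_neg, Units.val_one]
    push_cast
    ring

end SMAux7
section SMAux8
open Finset

lemma SM.omega_wit {n : ℕ} [NeZero n] (u : (ZMod n)ˣ) {r : ℕ} (i : Fin r → ℕ)
    (j₀ : Fin r) (h0 : i j₀ = 0) :
    OmegaSet n u i (fun _ => n) = Set.univ := by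
  ext x
  simp only [Set.mem_univ, iff_true, OmegaSet, Set.mem_setOf_eq]
  refine ⟨fun j => if j = j₀ then (x.val : ℤ) else 0, ?_, ?_⟩
  · intro j
    simp only
    by_cases hj : j = j₀
    · rw [if_pos hj, Int.abs_natCast]
      exact_mod_cast (ZMod.val_lt x).le
    · rw [if_neg hj]
      simp
  · have hsum : ∀ j, ((if j = j₀ then ((x.val : ℤ)) else 0 : ℤ) : ZMod n)
        * ((u ^ i j : (ZMod n)ˣ) : ZMod n)
        = if j = j₀ then ((x.val : ℤ) : ZMod n) * ((u ^ i j : (ZMod n)ˣ) : ZMod n) else 0 := by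
      intro j
      by_cases hj : j = j₀ <;> simp [hj]
    rw [Finset.sum_congr rfl (fun j _ => hsum j), Finset.sum_ite_eq' Finset.univ j₀]
    simp [h0, ZMod.natCast_val, ZMod.cast_id]

lemma SM.wt_mem {n : ℕ} [NeZero n] (u : (ZMod n)ˣ) {r : ℕ} (i : Fin r → ℕ)
    (j₀ : Fin r) (h0 : i j₀ = 0) :
    ∃ lam : Fin r → ℕ, OmegaSet n u i lam = Set.univ ∧ ∑ j, lam j = wtSeq n u i :=
  Nat.sInf_mem (⟨∑ _j : Fin r, n, fun _ => n, SM.omega_wit u i j₀ h0, rfl⟩ :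
    Set.Nonempty {s | ∃ lam : Fin r → ℕ, OmegaSet n u i lam = Set.univ ∧ ∑ j, lam j = s})

lemma SM.isSeq_delta (α : ℕ) : IsSeq α (DeltaSeq α) := by
  constructor
  · intro j
    unfold DeltaSeq
    omega
  · intro j j' hjj
    have h1 : (j : ℕ) < (j' : ℕ) := hjj
    have h2 : (j' : ℕ) < α := j'.isLt
    unfold DeltaSeq
    omega

lemma SM.zero_mem_delta (α : ℕ) (hα : 0 < α) : 0 ∈ Set.range (DeltaSeq α) := by
  refine ⟨⟨α - 1, by omega⟩, ?_⟩
  show α - 1 - (α - 1) = 0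
  omega

lemma SM.ncard_range {q : ℕ} {f : Fin q → ℕ} (hf : Function.Injective f) :
    (Set.range f).ncard = q := by
  rw [← Set.image_univ, Set.ncard_image_of_injective _ hf, Set.ncard_univ,
    Nat.card_eq_fintype_card, Fintype.card_fin]

lemma SM.exists_mp {n : ℕ} [NeZero n] (u : (ZMod n)ˣ) (α : ℕ) (hα : 0 < α) :
    ∃ (r : ℕ) (i : Fin r → ℕ), IsMinimalPrimeSeq n u α i := by
  set T : Set ℕ :=
    {r' | ∃ i : Fin r' → ℕ, IsSeq α i ∧ 0 ∈ Set.range i ∧ wtSeq n u i = wtAlpha n u α} with hT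
  have hTne : α ∈ T := ⟨DeltaSeq α, SM.isSeq_delta α, SM.zero_mem_delta α hα, rfl⟩
  obtain ⟨i₀, hseq, h0, hwt⟩ := Nat.sInf_mem (⟨α, hTne⟩ : T.Nonempty)
  refine ⟨sInf T, i₀, hseq, h0, hwt, ?_⟩
  intro q i₁ hs1 h01 hsub hne hwt1
  have hq : q ∈ T := ⟨i₁, hs1, h01, hwt1⟩
  have hle : sInf T ≤ q := Nat.sInf_le hq
  have hlt : q < sInf T := by
    have hc0 : (Set.range i₀).ncard = sInf T := SM.ncard_range hseq.2.injective
    have hc1 : (Set.range i₁).ncard = q := SM.ncard_range hs1.2.injective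
    have := Set.ncard_lt_ncard (ssubset_of_subset_of_ne hsub hne) (Set.finite_range i₀)
    omega
  omega

end SMAux8
theorem diam_split_metacyclic_bound (m n k : ℕ) (hm : 2 ≤ m) (hn : 3 ≤ n)
    (hk : Nat.Coprime k n) (hkm : k ^ m ≡ 1 [MOD n]) (α : ℕ)
    (hα : orderOf (ZMod.unitOfCoprime k hk) = α) (heven : Even α)
    (hneg : ZMod.unitOfCoprime k hk ^ (α / 2) = (-1 : (ZMod n)ˣ)) :
    (α ≠ m → diam (genSet m n k) ≤ m / 2 + wtAlpha n (ZMod.unitOfCoprime k hk) α) ∧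
    (α = m → diam (genSet m n k) ≤ m / 2 + wtAlpha n (ZMod.unitOfCoprime k hk) α
      + degNK n (ZMod.unitOfCoprime k hk) α) := by
  haveI : NeZero n := ⟨by omega⟩
  set u := ZMod.unitOfCoprime k hk with hudef
  have hu : (u : ZMod n) = (k : ZMod n) := ZMod.coe_unitOfCoprime k hk
  have hum : u ^ m = 1 := by
    ext
    rw [Units.val_pow_eq_pow_val, hu, ← Nat.cast_pow, Units.val_one]
    have := (ZMod.natCast_eq_natCast_iff _ _ _).2 hkm
    simpa using this
  have hαdvd : α ∣ m := hα ▸ orderOf_dvd_of_pow_eq_one hum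
  have hαpos : 0 < α := hα ▸ orderOf_pos u
  obtain ⟨h, hh⟩ := heven
  have hhpos : 0 < h := by omega
  have hhalf : α / 2 = h := by omega
  rw [hhalf] at hneg
  constructor
  · intro hαm
    have h2α : 2 * α ≤ m := by
      obtain ⟨q, hq⟩ := hαdvd
      rcases q with _ | _ | q
      · omega
      · omega
      · nlinarith
    obtain ⟨lam, hΩ, hsum⟩ := SM.wt_mem u (DeltaSeq α) ⟨α - 1, by omega⟩
      (by show α - 1 - (α - 1) = 0; omega)
    unfold diam
    refine ciSup_le fun g => ?_
    obtain ⟨z, a, rfl⟩ := SM.form u hu (by omega) g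
    have hz : z ∈ OmegaSet n u (DeltaSeq α) lam := by rw [hΩ]; trivial
    obtain ⟨b, hb, hzval⟩ := hz
    obtain ⟨a'', hdvd, ht''⟩ := SM.balanced m (by omega) a
    have hxa : xgen m n k ^ a = xgen m n k ^ a'' := SM.xzpow_congr hdvd
    set δ : ℤ := if 0 ≤ a'' then 1 else -1 with hδdef
    have hδ : δ = 1 ∨ δ = -1 := by
      by_cases h0 : 0 ≤ a'' <;> simp [hδdef, h0]
    set r : ℕ := max a''.natAbs (h - 1) with hrdef
    set pfun : Fin α → ℕ := fun j => ((-δ * ((DeltaSeq α j : ℕ) : ℤ)) % (h : ℤ)).toNat with hpdef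
    have hemod : ∀ j : Fin α, (0:ℤ) ≤ (-δ * ((DeltaSeq α j : ℕ) : ℤ)) % (h : ℤ) ∧
        (-δ * ((DeltaSeq α j : ℕ) : ℤ)) % (h : ℤ) < (h : ℤ) := by
      intro j
      constructor
      · exact Int.emod_nonneg _ (by exact_mod_cast hhpos.ne')
      · exact Int.emod_lt_of_pos _ (by exact_mod_cast hhpos)
    have hpval : ∀ j : Fin α, ((pfun j : ℕ) : ℤ) = (-δ * ((DeltaSeq α j : ℕ) : ℤ)) % (h : ℤ) := by
      intro j
      simp only [hpdef]
      rw [Int.toNat_of_nonneg (hemod j).1]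
    have hpfun_le : ∀ j : Fin α, pfun j ≤ r := by
      intro j
      have h1 := (hemod j).2
      have h2 := hpval j
      have h3 : (h:ℕ) - 1 ≤ r := le_max_right _ _
      omega
    have hsign : ∀ j : Fin α, ∃ s : ℤ, s.natAbs = 1 ∧
        (s : ZMod n) * ((u ^ (-(δ * ((pfun j : ℕ) : ℤ))) : (ZMod n)ˣ) : ZMod n)
          = ((u ^ ((DeltaSeq α j : ℕ) : ℤ) : (ZMod n)ˣ) : ZMod n) := by
      intro j
      refine SM.signK u h hneg _ _ ?_
      set e : ℤ := ((DeltaSeq α j : ℕ) : ℤ) with hedef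
      set Q : ℤ := (-δ * e) / (h : ℤ) with hQdef
      have hp2 : ((pfun j : ℕ) : ℤ) = -δ * e - (h : ℤ) * Q := by
        rw [hpval j, Int.emod_def]
      refine ⟨δ * Q, ?_⟩
      rcases hδ with h1 | h1 <;> rw [hp2, h1] <;> ring
    choose s hs1 hs2 using hsign
    set c : ℕ → ℤ := fun p => ∑ j ∈ Finset.univ.filter (fun j => pfun j = p), s j * b j with hc
    have hS : (∑ p ∈ Finset.range (r+1),
        (c p : ZMod n) * ((u ^ (-(δ * p)) : (ZMod n)ˣ) : ZMod n)) = z := by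
      calc ∑ p ∈ Finset.range (r+1),
            (c p : ZMod n) * ((u ^ (-(δ * p)) : (ZMod n)ˣ) : ZMod n)
          = ∑ p ∈ Finset.range (r+1), ∑ j ∈ Finset.univ.filter (fun j => pfun j = p),
              (b j : ZMod n) * ((u ^ (DeltaSeq α j) : (ZMod n)ˣ) : ZMod n) := by
            refine Finset.sum_congr rfl fun p _ => ?_
            simp only [hc]
            rw [Int.cast_sum, Finset.sum_mul]
            refine Finset.sum_congr rfl fun j hj => ?_
            have hpj : pfun j = p := (Finset.mem_filter.1 hj).2
            rw [← hpj, Int.cast_mul, mul_comm ((s j : ℤ) : ZMod n) ((b j : ℤ) : ZMod n),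
              mul_assoc, hs2 j, zpow_natCast]
        _ = ∑ j : Fin α, (b j : ZMod n) * ((u ^ (DeltaSeq α j) : (ZMod n)ˣ) : ZMod n) := by
            refine Finset.sum_fiberwise_of_maps_to ?_ _
            intro j _
            exact Finset.mem_range.2 (by have := hpfun_le j; omega)
        _ = z := hzval.symm
    have hw : (∑ p ∈ Finset.range (r+1), (c p).natAbs) ≤ wtAlpha n u α := by
      calc ∑ p ∈ Finset.range (r+1), (c p).natAbs
          ≤ ∑ p ∈ Finset.range (r+1), ∑ j ∈ Finset.univ.filter (fun j => pfun j = p),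
              (s j * b j).natAbs := by
            refine Finset.sum_le_sum fun p _ => ?_
            simp only [hc]
            exact SM.natAbs_sum_le _ _
        _ = ∑ j : Fin α, (s j * b j).natAbs := by
            refine Finset.sum_fiberwise_of_maps_to ?_ _
            intro j _
            exact Finset.mem_range.2 (by have := hpfun_le j; omega)
        _ ≤ ∑ j, lam j := by
            refine Finset.sum_le_sum fun j _ => ?_
            rw [Int.natAbs_mul, hs1 j, one_mul]
            have h2 : ((b j).natAbs : ℤ) ≤ (lam j : ℤ) := by
              rw [← Int.abs_eq_natAbs]
              exact hb j
            exact_mod_cast h2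
        _ = wtAlpha n u α := hsum
    have hfin := SM.build (m := m) u hu δ hδ c r a''
    rw [hS] at hfin
    rw [hxa]
    refine le_trans hfin ?_
    have harith : r + (a'' - δ * (r:ℤ)).natAbs ≤ m / 2 := by
      by_cases h0 : 0 ≤ a''
      · have h1 : δ = 1 := by rw [hδdef, if_pos h0]
        rw [h1, one_mul]
        omega
      · have h1 : δ = -1 := by rw [hδdef, if_neg h0]
        rw [h1, show a'' - (-1:ℤ) * (r:ℤ) = a'' + r by ring]
        omega
    omega

  · intro hαm
    -- minimal prime sequence of minimal degree
    have hmem : ∃ (r : ℕ) (i : Fin r → ℕ), IsMinimalPrimeSeq n u α i ∧ degSeq i = degNK n u α := by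
      have hne : Set.Nonempty
          {d | ∃ (r : ℕ) (i : Fin r → ℕ), IsMinimalPrimeSeq n u α i ∧ degSeq i = d} := by
        obtain ⟨r, i, hmp⟩ := SM.exists_mp u α hαpos
        exact ⟨degSeq i, r, i, hmp, rfl⟩
      exact Nat.sInf_mem hne
    obtain ⟨r, i, hmp, hdeg⟩ := hmem
    obtain ⟨j₀, hj₀⟩ := hmp.2.1
    obtain ⟨lam, hΩ, hsum⟩ := SM.wt_mem u i j₀ hj₀
    set d := degNK n u α with hddef
    have hentry : ∀ j, i j ≤ d := fun j =>
      hdeg ▸ le_csSup (Set.Finite.bddAbove (Set.finite_range i)) (Set.mem_range_self j)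
    unfold diam
    refine ciSup_le fun g => ?_
    obtain ⟨z, a, rfl⟩ := SM.form u hu (by omega) g
    have hz : z ∈ OmegaSet n u i lam := by rw [hΩ]; trivial
    obtain ⟨b, hb, hzval⟩ := hz
    obtain ⟨t', hdvd, ht'⟩ := SM.balanced m (by omega) (a + (d : ℤ))
    set a' := t' - (d : ℤ) with ha'
    have hxa : xgen m n k ^ a = xgen m n k ^ a' := by
      refine SM.xzpow_congr ?_
      rw [show a - a' = (a + (d:ℤ)) - t' by rw [ha']; ring]
      exact hdvd
    set c : ℕ → ℤ := fun p => ∑ j ∈ Finset.univ.filter (fun j => i j = p), b j with hc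
    have hS : (∑ p ∈ Finset.range (d+1),
        (c p : ZMod n) * ((u ^ (-((-1:ℤ) * p)) : (ZMod n)ˣ) : ZMod n)) = z := by
      calc ∑ p ∈ Finset.range (d+1),
            (c p : ZMod n) * ((u ^ (-((-1:ℤ) * p)) : (ZMod n)ˣ) : ZMod n)
          = ∑ p ∈ Finset.range (d+1), ∑ j ∈ Finset.univ.filter (fun j => i j = p),
              (b j : ZMod n) * ((u ^ (i j) : (ZMod n)ˣ) : ZMod n) := by
            refine Finset.sum_congr rfl fun p _ => ?_
            rw [show (-((-1:ℤ) * p)) = ((p:ℕ) : ℤ) by ring]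
            simp only [hc]
            push_cast [Finset.sum_mul]
            refine Finset.sum_congr rfl fun j hj => ?_
            rw [(Finset.mem_filter.1 hj).2, zpow_natCast, Units.val_pow_eq_pow_val]
        _ = ∑ j : Fin r, (b j : ZMod n) * ((u ^ (i j) : (ZMod n)ˣ) : ZMod n) := by
            refine Finset.sum_fiberwise_of_maps_to ?_ _
            intro j _
            exact Finset.mem_range.2 (by have := hentry j; omega)
        _ = z := hzval.symm
    have hw : (∑ p ∈ Finset.range (d+1), (c p).natAbs) ≤ wtAlpha n u α := by
      calc ∑ p ∈ Finset.range (d+1), (c p).natAbs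
          ≤ ∑ p ∈ Finset.range (d+1), ∑ j ∈ Finset.univ.filter (fun j => i j = p),
              (b j).natAbs := by
            refine Finset.sum_le_sum fun p _ => ?_
            simp only [hc]
            exact SM.natAbs_sum_le _ _
        _ = ∑ j : Fin r, (b j).natAbs := by
            refine Finset.sum_fiberwise_of_maps_to ?_ _
            intro j _
            exact Finset.mem_range.2 (by have := hentry j; omega)
        _ ≤ ∑ j, lam j := by
            refine Finset.sum_le_sum fun j _ => ?_
            have h2 : ((b j).natAbs : ℤ) ≤ (lam j : ℤ) := by
              rw [← Int.abs_eq_natAbs]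
              exact hb j
            exact_mod_cast h2
        _ = wtAlpha n u α := by rw [hsum, hmp.2.2.1]
    have hfin := SM.build (m := m) u hu (-1) (Or.inr rfl) c d a'
    rw [hS] at hfin
    rw [hxa]
    refine le_trans hfin ?_
    have habs : (a' - (-1:ℤ) * (d:ℤ)).natAbs = t'.natAbs := by
      rw [show a' - (-1:ℤ) * (d:ℤ) = t' by rw [ha']; ring]
    rw [habs]
    omega
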